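/- (Step (ii) of Proposition 2.) Under the stationarity, independence, L²-mixing and time-reversibility assumptions, E[δ(X_τ, X₀, V_τ)·δ(X₀, X_τ, −V₀)] → 0 as τ → ∞. -/

import Mathlib

open Matrix MeasureTheory ProbabilityTheory Filter

/-- The continuous linear map `y ↦ ∑ i, g i * y i`, i.e. the dot product with `g`;
used to say that a function has gradient `g` at a point. -/
noncomputable def dotCLM {d : ℕ} (g : Fin d → ℝ) : (Fin d → ℝ) →L[ℝ] ℝ :=
  ∑ i, g i • ContinuousLinearMap.proj i

/-- `gradEstimator φ gradφ M x y v = (φ(x) - φ(y)) · (∇φ(x)ᵀ M⁻¹ v)`, the unbiased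
estimator `δ` of the derivative of the expected squared jumping distance. -/
noncomputable def gradEstimator {d : ℕ} (φ : (Fin d → ℝ) → ℝ)
    (gradφ : (Fin d → ℝ) → (Fin d → ℝ)) (M : Matrix (Fin d) (Fin d) ℝ)
    (x y v : Fin d → ℝ) : ℝ :=
  (φ x - φ y) * (gradφ x ⬝ᵥ M⁻¹.mulVec v)

lemma dotCLM_apply {d : ℕ} (g y : Fin d → ℝ) : dotCLM g y = g ⬝ᵥ y := by
  simp [dotCLM, dotProduct]

/-- product of two L² functions is integrable -/
lemma l2_mul_integrable {α : Type*} [MeasurableSpace α] {μ : Measure α} {f g : α → ℝ}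
    (hf : MemLp f 2 μ) (hg : MemLp g 2 μ) : Integrable (fun a => f a * g a) μ := by
  have h := L2.integrable_inner (𝕜 := ℝ) (hf.toLp f) (hg.toLp g)
  refine h.congr ?_
  filter_upwards [hf.coeFn_toLp, hg.coeFn_toLp] with a ha hb
  simp [ha, hb, RCLike.inner_apply, mul_comm]

/-- Step (ii) of Proposition 2: under stationarity, independence, L²-mixing and
time-reversibility, `E[δ(X_τ, X₀, V_τ) · δ(X₀, X_τ, -V₀)] → 0` as `τ → ∞`. -/
theorem product_gradEstimators_tendsto_zero {d : ℕ}
    (M : Matrix (Fin d) (Fin d) ℝ) (hMsymm : M.IsSymm) (hMpd : M.PosDef)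
    (φ : (Fin d → ℝ) → ℝ) (gradφ : (Fin d → ℝ) → (Fin d → ℝ))
    (hφ : ContDiff ℝ 1 φ) (hgradφ : ∀ y, HasFDerivAt φ (dotCLM (gradφ y)) y)
    {Ω : Type*} [MeasurableSpace Ω] (μ : Measure Ω) [IsProbabilityMeasure μ]
    (X V : ℝ → Ω → Fin d → ℝ)
    (hXmeas : ∀ τ, Measurable (X τ)) (hVmeas : ∀ τ, Measurable (V τ))
    -- stationarity: the law of (X_τ, V_τ) equals the law Π* of (X₀, V₀)
    (hstat : ∀ τ ≥ (0 : ℝ),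
      Measure.map (fun a => (X τ a, V τ a)) μ = Measure.map (fun a => (X 0 a, V 0 a)) μ)
    -- independence: V₀ is integrable, centered, and independent of X₀
    (hVint : Integrable (V 0) μ) (hVcentered : ∫ a, V 0 a ∂μ = 0)
    (hindep : IndepFun (X 0) (V 0) μ)
    -- L²-mixing
    (hmix : ∀ ψ ω : (Fin d → ℝ) × (Fin d → ℝ) → ℝ,
      MemLp ψ 2 (Measure.map (fun a => (X 0 a, V 0 a)) μ) →
      MemLp ω 2 (Measure.map (fun a => (X 0 a, V 0 a)) μ) →
      Tendsto (fun τ => ∫ a, ψ (X τ a, V τ a) * ω (X 0 a, V 0 a) ∂μ) atTop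
        (nhds ((∫ a, ψ (X 0 a, V 0 a) ∂μ) * ∫ a, ω (X 0 a, V 0 a) ∂μ)))
    -- square-integrability of the relevant observables under Π*
    (hL2a : MemLp (fun p : (Fin d → ℝ) × (Fin d → ℝ) => φ p.1) 2
      (Measure.map (fun a => (X 0 a, V 0 a)) μ))
    (hL2b : MemLp (fun p : (Fin d → ℝ) × (Fin d → ℝ) => gradφ p.1 ⬝ᵥ M⁻¹.mulVec p.2) 2
      (Measure.map (fun a => (X 0 a, V 0 a)) μ))
    (hL2c : MemLp (fun p : (Fin d → ℝ) × (Fin d → ℝ) =>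
        φ p.1 * (gradφ p.1 ⬝ᵥ M⁻¹.mulVec p.2)) 2
      (Measure.map (fun a => (X 0 a, V 0 a)) μ))
    (hL2d : MemLp (fun p : (Fin d → ℝ) × (Fin d → ℝ) => φ p.1 ^ 2) 2
      (Measure.map (fun a => (X 0 a, V 0 a)) μ))
    (hL2e : MemLp (fun p : (Fin d → ℝ) × (Fin d → ℝ) =>
        φ p.1 ^ 2 * (gradφ p.1 ⬝ᵥ M⁻¹.mulVec p.2)) 2
      (Measure.map (fun a => (X 0 a, V 0 a)) μ))
    -- time-reversibility: (X_τ, V_τ, X₀, V₀) and (X₀, -V₀, X_τ, -V_τ) have the same law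
    (hrev : ∀ τ ≥ (0 : ℝ),
      Measure.map (fun a => (X τ a, V τ a, X 0 a, V 0 a)) μ =
      Measure.map (fun a => (X 0 a, -V 0 a, X τ a, -V τ a)) μ)
    -- integrability of the product δ(X_τ, X₀, V_τ) · δ(X₀, X_τ, -V₀)
    (hprodint : ∀ τ : ℝ,
      Integrable (fun a => gradEstimator φ gradφ M (X τ a) (X 0 a) (V τ a) *
        gradEstimator φ gradφ M (X 0 a) (X τ a) (-V 0 a)) μ) :
    Tendsto (fun τ => ∫ a, gradEstimator φ gradφ M (X τ a) (X 0 a) (V τ a) *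
        gradEstimator φ gradφ M (X 0 a) (X τ a) (-V 0 a) ∂μ)
      atTop (nhds 0) := by
  classical
  set π : Measure ((Fin d → ℝ) × (Fin d → ℝ)) :=
    Measure.map (fun a => (X 0 a, V 0 a)) μ with hπ
  have hpm : ∀ τ, Measurable (fun a => (X τ a, V τ a)) :=
    fun τ => (hXmeas τ).prodMk (hVmeas τ)
  haveI : IsProbabilityMeasure π := Measure.isProbabilityMeasure_map (hpm 0).aemeasurable
  -- the three observables
  set f : (Fin d → ℝ) × (Fin d → ℝ) → ℝ :=
    fun p => gradφ p.1 ⬝ᵥ M⁻¹.mulVec p.2 with hf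
  set ψc : (Fin d → ℝ) × (Fin d → ℝ) → ℝ :=
    fun p => φ p.1 * (gradφ p.1 ⬝ᵥ M⁻¹.mulVec p.2) with hψc
  set ψe : (Fin d → ℝ) × (Fin d → ℝ) → ℝ :=
    fun p => φ p.1 ^ 2 * (gradφ p.1 ⬝ᵥ M⁻¹.mulVec p.2) with hψe
  -- key vanishing lemma from independence and centering
  have key : ∀ c : (Fin d → ℝ) → (Fin d → ℝ),
      Integrable (fun p : (Fin d → ℝ) × (Fin d → ℝ) => c p.1 ⬝ᵥ p.2) π →
      ∫ a, c (X 0 a) ⬝ᵥ V 0 a ∂μ = 0 := by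
    intro c hint
    have hprod : π = (Measure.map (X 0) μ).prod (Measure.map (V 0) μ) :=
      (indepFun_iff_map_prod_eq_prod_map_map (hXmeas 0).aemeasurable
        (hVmeas 0).aemeasurable).mp hindep
    have hν : Integrable (id : (Fin d → ℝ) → (Fin d → ℝ)) (Measure.map (V 0) μ) := by
      rw [integrable_map_measure aestronglyMeasurable_id (hVmeas 0).aemeasurable]
      exact hVint
    have hmean : ∫ v, (id v : Fin d → ℝ) ∂(Measure.map (V 0) μ) = 0 := by
      rw [integral_map (hVmeas 0).aemeasurable aestronglyMeasurable_id]
      exact hVcentered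
    have h1 : ∫ a, c (X 0 a) ⬝ᵥ V 0 a ∂μ
        = ∫ p : (Fin d → ℝ) × (Fin d → ℝ), c p.1 ⬝ᵥ p.2 ∂π :=
      (integral_map (hpm 0).aemeasurable hint.1).symm
    rw [h1, hprod]
    rw [hprod] at hint
    rw [integral_prod _ hint]
    have hinner : ∀ x : Fin d → ℝ,
        ∫ v, c x ⬝ᵥ v ∂(Measure.map (V 0) μ) = 0 := by
      intro x
      have h2 : ∫ v, c x ⬝ᵥ v ∂(Measure.map (V 0) μ)
          = ∫ v, dotCLM (c x) (id v) ∂(Measure.map (V 0) μ) := by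
        simp only [dotCLM_apply, id]
      rw [h2, ContinuousLinearMap.integral_comp_comm (dotCLM (c x)) hν, hmean]
      simp [dotCLM_apply]
    simp [hinner]
  -- E[f] = 0
  have E0f : ∫ a, f (X 0 a, V 0 a) ∂μ = 0 := by
    have hfeq : (fun p : (Fin d → ℝ) × (Fin d → ℝ) => (M⁻¹.vecMul (gradφ p.1)) ⬝ᵥ p.2)
        = f := by
      funext p; rw [hf]; exact (Matrix.dotProduct_mulVec _ _ _).symm
    have := key (fun x => M⁻¹.vecMul (gradφ x)) (by rw [hfeq]; exact hL2b.integrable one_le_two)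
    calc ∫ a, f (X 0 a, V 0 a) ∂μ
        = ∫ a, (fun x => M⁻¹.vecMul (gradφ x)) (X 0 a) ⬝ᵥ V 0 a ∂μ := by
          simp only [hf, Matrix.dotProduct_mulVec]
      _ = 0 := this
  -- E[ψc] = 0
  have E0c : ∫ a, ψc (X 0 a, V 0 a) ∂μ = 0 := by
    have hfeq : (fun p : (Fin d → ℝ) × (Fin d → ℝ) =>
        (φ p.1 • M⁻¹.vecMul (gradφ p.1)) ⬝ᵥ p.2) = ψc := by
      funext p
      rw [hψc, smul_dotProduct, ← Matrix.dotProduct_mulVec, smul_eq_mul]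
    have := key (fun x => φ x • M⁻¹.vecMul (gradφ x))
      (by rw [hfeq]; exact hL2c.integrable one_le_two)
    calc ∫ a, ψc (X 0 a, V 0 a) ∂μ
        = ∫ a, (fun x => φ x • M⁻¹.vecMul (gradφ x)) (X 0 a) ⬝ᵥ V 0 a ∂μ := by
          simp only [← hfeq]
      _ = 0 := this
  -- transfer of L² to time τ
  have hmem : ∀ (ψ : (Fin d → ℝ) × (Fin d → ℝ) → ℝ), MemLp ψ 2 π → ∀ τ ≥ (0 : ℝ),
      MemLp (fun a => ψ (X τ a, V τ a)) 2 μ := by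
    intro ψ hψ τ hτ
    have h1 : MemLp ψ 2 (Measure.map (fun a => (X τ a, V τ a)) μ) := by
      rw [hstat τ hτ]; exact hψ
    exact (memLp_map_measure_iff h1.1 (hpm τ).aemeasurable).mp h1
  -- mixing limits
  have h1 := hmix ψe f hL2e hL2b
  have h2 := hmix ψc ψc hL2c hL2c
  have h3 := hmix f ψe hL2b hL2e
  have hcomb := (h1.sub (h2.const_mul 2)).add h3
  have hlim : (∫ a, ψe (X 0 a, V 0 a) ∂μ) * (∫ a, f (X 0 a, V 0 a) ∂μ)
      - 2 * ((∫ a, ψc (X 0 a, V 0 a) ∂μ) * (∫ a, ψc (X 0 a, V 0 a) ∂μ))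
      + (∫ a, f (X 0 a, V 0 a) ∂μ) * (∫ a, ψe (X 0 a, V 0 a) ∂μ) = 0 := by
    rw [E0f, E0c]; ring
  rw [hlim] at hcomb
  refine hcomb.congr' ?_
  filter_upwards [eventually_ge_atTop (0 : ℝ)] with τ hτ
  -- eventual equality of the integrals
  have hmτe := hmem ψe hL2e τ hτ
  have hmτc := hmem ψc hL2c τ hτ
  have hmτb := hmem f hL2b τ hτ
  have hm0e := hmem ψe hL2e 0 le_rfl
  have hm0c := hmem ψc hL2c 0 le_rfl
  have hm0b := hmem f hL2b 0 le_rfl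
  have hi1 : Integrable (fun a => ψe (X τ a, V τ a) * f (X 0 a, V 0 a)) μ :=
    l2_mul_integrable hmτe hm0b
  have hi2 : Integrable (fun a => ψc (X τ a, V τ a) * ψc (X 0 a, V 0 a)) μ :=
    l2_mul_integrable hmτc hm0c
  have hi3 : Integrable (fun a => f (X τ a, V τ a) * ψe (X 0 a, V 0 a)) μ :=
    l2_mul_integrable hmτb hm0e
  have hpt : ∀ a, gradEstimator φ gradφ M (X τ a) (X 0 a) (V τ a) *
      gradEstimator φ gradφ M (X 0 a) (X τ a) (-V 0 a)
      = ψe (X τ a, V τ a) * f (X 0 a, V 0 a)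
        - 2 * (ψc (X τ a, V τ a) * ψc (X 0 a, V 0 a))
        + f (X τ a, V τ a) * ψe (X 0 a, V 0 a) := by
    intro a
    simp only [gradEstimator, hψe, hψc, hf, Matrix.mulVec_neg, dotProduct_neg]
    ring
  calc ∫ a, ψe (X τ a, V τ a) * f (X 0 a, V 0 a) ∂μ
        - 2 * ∫ a, ψc (X τ a, V τ a) * ψc (X 0 a, V 0 a) ∂μ
        + ∫ a, f (X τ a, V τ a) * ψe (X 0 a, V 0 a) ∂μ
      = ∫ a, ψe (X τ a, V τ a) * f (X 0 a, V 0 a)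
        - 2 * (ψc (X τ a, V τ a) * ψc (X 0 a, V 0 a))
        + f (X τ a, V τ a) * ψe (X 0 a, V 0 a) ∂μ := by
        have hi12 : Integrable (fun a => ψe (X τ a, V τ a) * f (X 0 a, V 0 a)
            - 2 * (ψc (X τ a, V τ a) * ψc (X 0 a, V 0 a))) μ := hi1.sub (hi2.const_mul 2)
        rw [integral_add hi12 hi3, integral_sub hi1 (hi2.const_mul 2), integral_const_mul]
    _ = ∫ a, gradEstimator φ gradφ M (X τ a) (X 0 a) (V τ a) *
        gradEstimator φ gradφ M (X 0 a) (X τ a) (-V 0 a) ∂μ :=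
        integral_congr_ae (Filter.Eventually.of_forall fun a => (hpt a).symm)
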